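/- Let X be a complete metric space, Y a metric space, U ⊆ X and V ⊆ Y open sets, and F : X ⇒ Y a set-valued mapping with closed graph. Define ψ_y(x) = d(y, F(x)) and ψ̄_y(x) = liminf_{u→x} ψ_y(u). If for any x ∈ U and y ∈ V with 0 < ψ̄_y(x) < r·m(x) (where m(x) = d(x, X∖U)) there exists u ≠ x such that ψ̄_y(u) ≤ ψ̄_y(x) − r·d(x,u), then F is Milyutin regular on U × V with sur_m F(U|V) ≥ r. -/

import Mathlib

open EMetric ENNReal Filter

/-- `ψ̄_y(x) = liminf_{u → x} d(y, F u)`, the lower semicontinuous envelope of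
`ψ_y(x) = d(y, F x)` (with `d(y, ∅) = ∞`). -/
noncomputable def psiBar {X Y : Type*} [MetricSpace X] [MetricSpace Y]
    (F : X → Set Y) (y : Y) (x : X) : ℝ≥0∞ :=
  liminf (fun u => infEdist y (F u)) (nhds x)

lemma psiBar_le {X Y : Type*} [MetricSpace X] [MetricSpace Y]
    (F : X → Set Y) (y : Y) (x : X) : psiBar F y x ≤ infEdist y (F x) := by
  apply liminf_le_of_frequently_le'
  exact frequently_iff.2 fun hs => ⟨x, mem_of_mem_nhds hs, le_rfl⟩

lemma psiBar_lsc {X Y : Type*} [MetricSpace X] [MetricSpace Y]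
    (F : X → Set Y) (y : Y) : LowerSemicontinuous (psiBar F y) := by
  intro x a ha
  obtain ⟨b, hab, hb⟩ := exists_between ha
  have h1 : ∀ᶠ u in nhds x, b < infEdist y (F u) := eventually_lt_of_lt_liminf hb
  obtain ⟨s, hsall, hso, hxs⟩ := eventually_nhds_iff.1 h1
  filter_upwards [hso.mem_nhds hxs] with u hu
  refine lt_of_lt_of_le hab (le_liminf_of_le (by isBoundedDefault) ?_)
  filter_upwards [hso.mem_nhds hu] with w hw
  exact (hsall w hw).le

lemma psiBar_zero_mem {X Y : Type*} [MetricSpace X] [MetricSpace Y]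
    {F : X → Set Y} (hgraph : IsClosed {p : X × Y | p.2 ∈ F p.1})
    {y : Y} {u : X} (h : psiBar F y u = 0) : y ∈ F u := by
  have : (u, y) ∈ {p : X × Y | p.2 ∈ F p.1} := by
    rw [← hgraph.closure_eq]
    rw [mem_closure_iff_nhds]
    intro s hs
    obtain ⟨s1, hs1, s2, hs2, hsub⟩ := mem_nhds_prod_iff.1 hs
    obtain ⟨ε, εpos, hball⟩ := EMetric.mem_nhds_iff.1 hs2
    have hlt : liminf (fun u => infEdist y (F u)) (nhds u) < ε := by
      show psiBar F y u < ε
      rw [h]; exact εpos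
    have hfreq : ∃ᶠ w in nhds u, infEdist y (F w) < ε :=
      frequently_lt_of_liminf_lt (by isBoundedDefault) hlt
    obtain ⟨w, hw1, hw2⟩ := (hfreq.and_eventually hs1).exists
    obtain ⟨v, hvF, hv⟩ := infEdist_lt_iff.1 hw1
    refine ⟨(w, v), hsub ⟨hw2, hball ?_⟩, hvF⟩
    rwa [EMetric.mem_ball, edist_comm]
  exact this

theorem second_milyutin_criterion {X Y : Type*} [MetricSpace X] [CompleteSpace X]
    [MetricSpace Y]
    (F : X → Set Y) (U : Set X) (V : Set Y) (hU : IsOpen U) (hV : IsOpen V)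
    (hgraph : IsClosed {p : X × Y | p.2 ∈ F p.1})
    (r : ℝ≥0∞) (hr : 0 < r) (hrtop : r ≠ ⊤)
    (descent : ∀ x ∈ U, ∀ y ∈ V,
      0 < psiBar F y x → psiBar F y x < r * infEdist x Uᶜ →
      ∃ u : X, u ≠ x ∧ psiBar F y u + r * edist x u ≤ psiBar F y x) :
    ∀ x ∈ U, ∀ t : ℝ≥0∞, t < infEdist x Uᶜ → ∀ y ∈ V,
      (∃ v ∈ F x, edist y v ≤ r * t) → ∃ u : X, edist x u ≤ t ∧ y ∈ F u := by
  intro x hxU t ht y hyV hv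
  obtain ⟨v, hvF, hvy⟩ := hv
  set ψ : X → ℝ≥0∞ := psiBar F y with hψdef
  have htne : t ≠ ⊤ := ht.ne_top
  have hrt_ne : r * t ≠ ⊤ := ENNReal.mul_ne_top hrtop htne
  have hψx : ψ x ≤ r * t :=
    le_trans (psiBar_le F y x) (le_trans (infEdist_le_edist_of_mem hvF) hvy)
  -- the descent order
  set S : X → Set X := fun c => {w | ψ w + r * edist c w ≤ ψ c} with hSdef
  have hrefl : ∀ c, c ∈ S c := by
    intro c; simp [hSdef, edist_self]
  have htrans : ∀ {w c c'}, w ∈ S c → c ∈ S c' → w ∈ S c' := by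
    intro w c c' h1 h2
    have : ψ w + r * edist c' w ≤ (ψ w + r * edist c w) + r * edist c' c := by
      calc ψ w + r * edist c' w ≤ ψ w + r * (edist c' c + edist c w) := by
            gcongr; exact edist_triangle _ _ _
        _ = (ψ w + r * edist c w) + r * edist c' c := by ring
    calc ψ w + r * edist c' w ≤ (ψ w + r * edist c w) + r * edist c' c := this
      _ ≤ ψ c + r * edist c' c := add_le_add_left h1 _
      _ ≤ ψ c' := h2
  -- membership in S x gives bounds
  have hSx_dist : ∀ w ∈ S x, edist x w ≤ t := by
    intro w hw
    have h1 : r * edist x w ≤ r * t :=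
      le_trans (le_trans le_add_self hw) hψx
    exact (ENNReal.mul_le_mul_iff_right hr.ne' hrtop).1 h1
  have hSx_psi : ∀ w ∈ S x, ψ w ≤ r * t := fun w hw =>
    le_trans (le_trans le_self_add hw) hψx
  -- existence of near-minimizing descent step
  have key : ∀ c : X, ∀ e : ℝ≥0∞, e ≠ 0 →
      ∃ w, w ∈ S c ∧ ψ w ≤ (⨅ w' ∈ S c, ψ w') + e := by
    intro c e he
    by_cases hi : (⨅ w' ∈ S c, ψ w') = ⊤
    · exact ⟨c, hrefl c, by rw [hi]; exact le_top.trans le_self_add⟩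
    · have : (⨅ w' ∈ S c, ψ w') < (⨅ w' ∈ S c, ψ w') + e :=
        ENNReal.lt_add_right hi he
      obtain ⟨w, hw⟩ := iInf_lt_iff.1 this
      obtain ⟨hwS, hwlt⟩ := iInf_lt_iff.1 hw
      exact ⟨w, hwS, hwlt.le⟩
  -- the iteration
  set ε : ℕ → ℝ≥0∞ := fun n => 2⁻¹ ^ n with hεdef
  have hεne : ∀ n, ε n ≠ 0 := fun n => pow_ne_zero n (by simp)
  let seq : ℕ → X := fun n => Nat.rec x (fun n p => (key p (ε n) (hεne n)).choose) n
  have hseq0 : seq 0 = x := rfl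
  have hseqS : ∀ n, seq (n + 1) ∈ S (seq n) ∧
      ψ (seq (n + 1)) ≤ (⨅ w ∈ S (seq n), ψ w) + ε n := fun n =>
    (key (seq n) (ε n) (hεne n)).choose_spec
  have hmono : ∀ n m, n ≤ m → S (seq m) ⊆ S (seq n) := by
    intro n m hnm
    induction m, hnm using Nat.le_induction with
    | base => exact le_rfl
    | succ m hm ih =>
      exact Set.Subset.trans (fun w hw => htrans hw (hseqS m).1) ih
  have hchain : ∀ n, seq n ∈ S x := by
    intro n
    have := hmono 0 n (Nat.zero_le n) (hrefl (seq n))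
    rwa [hseq0] at this
  have hψfin : ∀ w ∈ S x, ψ w ≠ ⊤ := fun w hw =>
    ne_top_of_le_ne_top hrt_ne (hSx_psi w hw)
  -- key quantitative estimate: anything below `seq (n+1)` is within `ε n / r` of it
  have hquant : ∀ n, ∀ w ∈ S (seq (n + 1)), w ∈ S (seq n) → edist (seq (n + 1)) w ≤ ε n / r := by
    intro n w hw1 hw0
    have hinf_le : (⨅ w' ∈ S (seq n), ψ w') ≤ ψ w := biInf_le _ hw0
    have h1 : ψ w + r * edist (seq (n + 1)) w ≤ ψ w + ε n :=
      calc ψ w + r * edist (seq (n + 1)) w ≤ ψ (seq (n + 1)) := hw1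
        _ ≤ (⨅ w' ∈ S (seq n), ψ w') + ε n := (hseqS n).2
        _ ≤ ψ w + ε n := by gcongr
    have hwfin : ψ w ≠ ⊤ := hψfin w (htrans hw0 (hchain n))
    have h2 : r * edist (seq (n + 1)) w ≤ ε n :=
      (ENNReal.add_le_add_iff_left hwfin).1 h1
    rw [ENNReal.le_div_iff_mul_le (Or.inl hr.ne') (Or.inl hrtop), mul_comm]
    exact h2
  -- Cauchy property of the shifted sequence
  set g : ℕ → X := fun n => seq (n + 1) with hgdef
  have hgstep : ∀ n, edist (g n) (g (n + 1)) ≤ r⁻¹ * 2⁻¹ ^ n := by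
    intro n
    have h1 : g (n + 1) ∈ S (seq (n + 1)) := (hseqS (n + 1)).1
    have h0 : g (n + 1) ∈ S (seq n) := hmono n (n + 1) (Nat.le_succ n) h1
    have := hquant n (g (n + 1)) h1 h0
    rwa [ENNReal.div_eq_inv_mul] at this
  have hcauchy : CauchySeq g :=
    cauchySeq_of_edist_le_geometric 2⁻¹ r⁻¹
      (by simp [ENNReal.inv_lt_one]) (ENNReal.inv_ne_top.2 hr.ne') hgstep
  obtain ⟨uu, hlim⟩ := cauchySeq_tendsto_of_complete hcauchy
  -- S c is closed
  have hSclosed : ∀ c, IsClosed (S c) := by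
    intro c
    have hlsc : LowerSemicontinuous fun w => ψ w + r * edist c w := by
      apply LowerSemicontinuous.add (psiBar_lsc F y)
      exact Continuous.lowerSemicontinuous
        ((ENNReal.continuous_const_mul hrtop).comp (continuous_const.edist continuous_id))
    exact hlsc.isClosed_preimage (ψ c)
  have huuS : ∀ n, uu ∈ S (seq n) := by
    intro n
    refine (hSclosed (seq n)).mem_of_tendsto hlim ?_
    filter_upwards [eventually_ge_atTop n] with m hm
    exact hmono n (m + 1) (le_trans hm (Nat.le_succ m)) (hrefl (seq (m + 1)))
  have huux : uu ∈ S x := by have := huuS 0; rwa [hseq0] at this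
  have hd : edist x uu ≤ t := hSx_dist uu huux
  rcases eq_or_ne (ψ uu) 0 with h0 | hpos
  · exact ⟨uu, hd, psiBar_zero_mem hgraph h0⟩
  exfalso
  have hψpos : 0 < ψ uu := pos_iff_ne_zero.2 hpos
  have hred_ne : r * edist x uu ≠ ⊤ :=
    ne_top_of_le_ne_top hrt_ne (by gcongr)
  -- uu satisfies the hypotheses of `descent`
  have hlt : ψ uu < r * infEdist uu Uᶜ := by
    have h1 : ψ uu + r * edist x uu < r * infEdist x Uᶜ :=
      lt_of_le_of_lt (le_trans huux hψx)
        ((ENNReal.mul_lt_mul_iff_right hr.ne' hrtop).2 ht)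
    have h2 : r * infEdist x Uᶜ ≤ r * infEdist uu Uᶜ + r * edist x uu := by
      rw [← mul_add]
      exact mul_le_mul_right infEdist_le_infEdist_add_edist r
    have h3 : ψ uu + r * edist x uu < r * infEdist uu Uᶜ + r * edist x uu :=
      lt_of_lt_of_le h1 h2
    exact (ENNReal.add_lt_add_iff_right hred_ne).1 h3
  have huuU : uu ∈ U := by
    by_contra hn
    have : infEdist uu Uᶜ = 0 := infEdist_zero_of_mem hn
    rw [this, mul_zero] at hlt
    exact (not_lt_of_ge hlt.le) hψpos
  obtain ⟨w, hwne, hwS⟩ := descent uu huuU y hyV hψpos hlt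
  -- w is below everything in the chain, hence equals uu
  have hwSn : ∀ n, w ∈ S (seq n) := fun n => htrans hwS (huuS n)
  have hwb : ∀ n, edist (seq (n + 1)) w ≤ ε n / r := fun n =>
    hquant n w (hwSn (n + 1)) (hwSn n)
  have htend : Tendsto (fun n => edist uu (g n) + ε n / r) atTop (nhds 0) := by
    have h1 : Tendsto (fun n => edist uu (g n)) atTop (nhds 0) := by
      have h0 : Tendsto (fun n : ℕ => edist uu (g n)) atTop (nhds (edist uu uu)) :=
        Tendsto.edist tendsto_const_nhds hlim
      rwa [edist_self] at h0
    have h2 : Tendsto (fun n => ε n / r) atTop (nhds 0) := by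
      have h3 : Tendsto ε atTop (nhds 0) :=
        ENNReal.tendsto_pow_atTop_nhds_zero_of_lt_one (by simp [ENNReal.inv_lt_one])
      simpa using ENNReal.Tendsto.div_const h3 (Or.inr hr.ne')
    simpa using h1.add h2
  have hedist0 : edist uu w = 0 := by
    have hle : ∀ n, edist uu w ≤ edist uu (g n) + ε n / r := by
      intro n
      calc edist uu w ≤ edist uu (g n) + edist (g n) w := edist_triangle _ _ _
        _ ≤ edist uu (g n) + ε n / r := by gcongr; exact hwb n
    have := ge_of_tendsto htend (Eventually.of_forall hle)
    exact le_antisymm this zero_le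
  exact hwne (edist_eq_zero.1 (by rwa [edist_comm] at hedist0))
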